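/- Setting L̄_{2k−1} = span{Q^{2k−1}_l : l = 1,...,n} and L̄_{2k} = span{Q^{2k}_{ij} : i < j}, the Lie algebra L(n) decomposes as L(n) = ⊕_{m≥1} L̄_m and is quasigraded: [L̄_i, L̄_j] ⊆ L̄_{i+j} + L̄_{i+j−2} for all i, j ≥ 1 (with L̄_0 = L̄_{−1} = 0). Moreover dim L̄_{2k−1} = n and dim L̄_{2k} = n(n−1)/2 for every k ≥ 1. -/

import Mathlib

open MvPolynomial Matrix

noncomputable section

/-- The ideal generated by the polynomials `λᵢ² − λⱼ² + rᵢ − rⱼ`. -/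
def LLIdeal (n : ℕ) (r : Fin n → ℂ) : Ideal (MvPolynomial (Fin n) ℂ) :=
  Ideal.span {p | ∃ i j : Fin n, p = X i ^ 2 - X j ^ 2 + C (r i) - C (r j)}

/-- The algebra `Q` of polynomial functions on the curve. -/
abbrev LLQ (n : ℕ) (r : Fin n → ℂ) : Type := MvPolynomial (Fin n) ℂ ⧸ LLIdeal n r

/-- `λ̄ᵢ`, the image of `λᵢ` in `Q`. -/
def lamQ (n : ℕ) (r : Fin n → ℂ) (i : Fin n) : LLQ n r :=
  Ideal.Quotient.mk _ (X i)

/-- `λ̄ = λ̄ᵢ² + rᵢ` (independent of `i`). -/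
def lambar (n : ℕ) (r : Fin n → ℂ) [NeZero n] : LLQ n r :=
  lamQ n r 0 ^ 2 + algebraMap ℂ _ (r 0)

/-- Matrices of size `n+1` over `Q`; contains `so(n,1) ⊗ Q` with its commutator
Lie bracket. -/
abbrev LLM (n : ℕ) (r : Fin n → ℂ) : Type := Matrix (Fin (n+1)) (Fin (n+1)) (LLQ n r)

/-- `Q_i = (E_{i,n+1} + E_{n+1,i}) ⊗ λ̄ᵢ`. -/
def Qgen (n : ℕ) (r : Fin n → ℂ) (i : Fin n) : LLM n r :=
  lamQ n r i • (single i.castSucc (Fin.last n) 1 + single (Fin.last n) i.castSucc 1)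

/-- `Q^{2k-1}_l = (E_{l,n+1} + E_{n+1,l}) ⊗ λ̄^{k-1} λ̄_l`. -/
def Qodd (n : ℕ) (r : Fin n → ℂ) [NeZero n] (k : ℕ) (l : Fin n) : LLM n r :=
  (lambar n r ^ (k-1) * lamQ n r l) •
    (single l.castSucc (Fin.last n) 1 + single (Fin.last n) l.castSucc 1)

/-- `Q^{2k}_{ij} = (E_{i,j} − E_{j,i}) ⊗ λ̄^{k-1} λ̄ᵢ λ̄ⱼ`. -/
def Qeven (n : ℕ) (r : Fin n → ℂ) [NeZero n] (k : ℕ) (i j : Fin n) : LLM n r :=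
  (lambar n r ^ (k-1) * lamQ n r i * lamQ n r j) •
    (single i.castSucc j.castSucc 1 - single j.castSucc i.castSucc 1)

end

attribute [local instance 100] LieRing.ofAssociativeRing

set_option maxHeartbeats 1000000
set_option synthInstance.maxHeartbeats 400000

noncomputable section AuxLL

variable (n : ℕ) (r : Fin n → ℂ) [NeZero n]

/-- chosen square root of `c - r i` -/
def sqcLL (c : ℂ) (i : Fin n) : ℂ := (c - r i) ^ ((1:ℂ)/2)

omit [NeZero n] in
lemma sqcLL_sq (c : ℂ) (i : Fin n) : sqcLL n r c i ^ 2 = c - r i := by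
  have := Complex.cpow_nat_inv_pow (c - r i) (n := 2) two_ne_zero
  norm_num at this
  simpa [sqcLL] using this

/-- the bad set of evaluation points -/
def BadCLL : Set ℂ := {0} ∪ Set.range r

omit [NeZero n] in
lemma badCLL_finite : (BadCLL n r).Finite :=
  (Set.finite_singleton 0).union (Set.finite_range r)

/-- evaluation of `Q` at the point `(sqcLL c i)_i` of the curve -/
def evalQLL (c : ℂ) : LLQ n r →+* ℂ :=
  Ideal.Quotient.lift _ (MvPolynomial.eval (sqcLL n r c)) (by
    intro a ha
    have hle : LLIdeal n r ≤ RingHom.ker (MvPolynomial.eval (sqcLL n r c)) := by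
      rw [LLIdeal, Ideal.span_le]
      rintro p ⟨i, j, rfl⟩
      simp only [SetLike.mem_coe, RingHom.mem_ker, map_add, map_sub, map_pow, eval_X, eval_C,
        sqcLL_sq]
      ring
    exact hle ha)

@[simp] lemma evalQLL_lamQ (c : ℂ) (i : Fin n) : evalQLL n r c (lamQ n r i) = sqcLL n r c i := by
  simp only [evalQLL, lamQ]
  erw [Ideal.Quotient.lift_mk]
  simp

@[simp] lemma evalQLL_algebraMap (c z : ℂ) : evalQLL n r c (algebraMap ℂ (LLQ n r) z) = z := by
  have : algebraMap ℂ (LLQ n r) z = Ideal.Quotient.mk _ (C z) := rfl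
  simp only [this, evalQLL]
  erw [Ideal.Quotient.lift_mk]
  simp

@[simp] lemma evalQLL_smul (c z : ℂ) (q : LLQ n r) :
    evalQLL n r c (z • q) = z * evalQLL n r c q := by
  have hz : z • q = algebraMap ℂ (LLQ n r) z * q := Algebra.smul_def z q
  rw [hz, _root_.map_mul, evalQLL_algebraMap]

@[simp] lemma evalQLL_lambar (c : ℂ) : evalQLL n r c (lambar n r) = c := by
  simp [lambar, map_add, map_pow, sqcLL_sq]

omit [NeZero n] in
lemma sqcLL_ne_zero {c : ℂ} (hc : c ∉ BadCLL n r) (i : Fin n) : sqcLL n r c i ≠ 0 := by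
  intro h
  have := sqcLL_sq n r c i
  rw [h] at this
  simp only [BadCLL, Set.mem_union, Set.mem_singleton_iff, Set.mem_range, not_or,
    not_exists] at hc
  have : c = r i := by linear_combination -this
  exact hc.2 i this.symm

/-- The core linear-independence lemma. -/
lemma li_core {w : LLQ n r} (hw : ∀ c : ℂ, c ∉ BadCLL n r → evalQLL n r c w ≠ 0)
    {ι : Type*} (F : Finset ι) (κ : ι → ℕ) (hκ : Set.InjOn κ F) (a : ι → ℂ)
    (h : ∑ m ∈ F, a m • (lambar n r ^ κ m * w) = 0) : ∀ m ∈ F, a m = 0 := by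
  classical
  set p : Polynomial ℂ := ∑ m ∈ F, Polynomial.monomial (κ m) (a m) with hp
  have hroot : ∀ c ∉ BadCLL n r, p.IsRoot c := by
    intro c hc
    have h2 := congrArg (evalQLL n r c) h
    simp only [map_sum, evalQLL_smul, _root_.map_mul, map_pow, evalQLL_lambar, map_zero] at h2
    have h3 : (∑ m ∈ F, a m * c ^ κ m) * evalQLL n r c w = 0 := by
      rw [Finset.sum_mul, ← h2]
      exact Finset.sum_congr rfl fun m _ => by ring
    rcases mul_eq_zero.1 h3 with h4 | h4
    · simp [Polynomial.IsRoot, hp, Polynomial.eval_finset_sum, h4]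
    · exact absurd h4 (hw c hc)
  have hpz : p = 0 := by
    apply Polynomial.eq_zero_of_infinite_isRoot
    apply Set.Infinite.mono (s := (BadCLL n r)ᶜ)
    · intro c hc; exact hroot c hc
    · exact Set.Finite.infinite_compl (badCLL_finite n r)
  intro m hm
  have := congrArg (fun q => Polynomial.coeff q (κ m)) hpz
  simp only [hp, Polynomial.finset_sum_coeff, Polynomial.coeff_monomial,
    Polynomial.coeff_zero] at this
  rwa [Finset.sum_eq_single m (fun m' hm' hne => by
    rw [if_neg]; exact fun hc => hne (hκ hm' hm hc)) (fun h => absurd hm h), if_pos rfl] at this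

lemma li_w_ne (w : LLQ n r) (hw : ∀ c : ℂ, c ∉ BadCLL n r → evalQLL n r c w ≠ 0) (k : ℕ) :
    lambar n r ^ k * w ≠ 0 := by
  obtain ⟨c, hc⟩ := (Set.Finite.infinite_compl (badCLL_finite n r)).nonempty
  intro h
  have := congrArg (evalQLL n r c) h
  simp only [_root_.map_mul, map_pow, evalQLL_lambar, map_zero] at this
  rcases mul_eq_zero.1 this with h4 | h4
  · exact pow_ne_zero k (by rintro rfl; exact hc (Or.inl rfl)) h4
  · exact hw c hc h4

lemma hw_odd (l : Fin n) : ∀ c : ℂ, c ∉ BadCLL n r → evalQLL n r c (lamQ n r l) ≠ 0 := by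
  intro c hc
  rw [evalQLL_lamQ]
  exact sqcLL_ne_zero n r hc l

lemma hw_even (i j : Fin n) :
    ∀ c : ℂ, c ∉ BadCLL n r → evalQLL n r c (lamQ n r i * lamQ n r j) ≠ 0 := by
  intro c hc
  rw [_root_.map_mul, evalQLL_lamQ, evalQLL_lamQ]
  exact mul_ne_zero (sqcLL_ne_zero n r hc i) (sqcLL_ne_zero n r hc j)

lemma lamQ_sq (j : Fin n) : lamQ n r j ^ 2 = lambar n r - algebraMap ℂ _ (r j) := by
  have hmem : (X j ^ 2 - X (0 : Fin n) ^ 2 + C (r j) - C (r 0)) ∈ LLIdeal n r :=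
    Ideal.subset_span ⟨j, 0, rfl⟩
  have h0 : (Ideal.Quotient.mk (LLIdeal n r)) (X j ^ 2 - X (0:Fin n) ^ 2 + C (r j) - C (r 0)) = 0 :=
    Ideal.Quotient.eq_zero_iff_mem.2 hmem
  have hc : ∀ z : ℂ, algebraMap ℂ (LLQ n r) z = Ideal.Quotient.mk _ (C z) := fun _ => rfl
  simp only [lambar, lamQ, hc]
  simp only [map_add, map_sub, map_pow] at h0
  linear_combination h0

lemma coeff_odd_ne (k : ℕ) (l : Fin n) : lambar n r ^ (k-1) * lamQ n r l ≠ 0 :=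
  li_w_ne n r _ (hw_odd n r l) _

lemma coeff_even_ne (k : ℕ) (i j : Fin n) :
    lambar n r ^ (k-1) * lamQ n r i * lamQ n r j ≠ 0 := by
  have := li_w_ne n r _ (hw_even n r i j) (k-1)
  rwa [← mul_assoc] at this

end AuxLL

noncomputable section MatLL

variable (n : ℕ) (r : Fin n → ℂ) [NeZero n]

def SMLL (l : Fin n) : LLM n r :=
  single l.castSucc (Fin.last n) 1 + single (Fin.last n) l.castSucc 1

def RMLL (i j : Fin n) : LLM n r :=
  single i.castSucc j.castSucc 1 - single j.castSucc i.castSucc 1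

lemma Qodd_eq (k : ℕ) (l : Fin n) :
    Qodd n r k l = (lambar n r ^ (k-1) * lamQ n r l) • SMLL n r l := rfl

lemma Qeven_eq (k : ℕ) (i j : Fin n) :
    Qeven n r k i j = (lambar n r ^ (k-1) * lamQ n r i * lamQ n r j) • RMLL n r i j := rfl

lemma Qgen_eq_Qodd (i : Fin n) : Qgen n r i = Qodd n r 1 i := by
  simp [Qgen, Qodd]

omit [NeZero n] in
lemma hclLL : ∀ x : Fin n, Fin.castSucc x ≠ Fin.last n := fun x => (Fin.castSucc_lt_last x).ne
omit [NeZero n] in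
lemma hlcLL : ∀ x : Fin n, Fin.last n ≠ Fin.castSucc x := fun x => (Fin.castSucc_lt_last x).ne'

omit [NeZero n] in
lemma msmul_mul (a : LLQ n r) (A B : LLM n r) : (a • A) * B = a • (A * B) := by
  ext i j
  simp only [Matrix.mul_apply, Matrix.smul_apply, smul_eq_mul, Finset.mul_sum]
  exact Finset.sum_congr rfl fun x _ => by ring

omit [NeZero n] in
lemma mul_msmul (a : LLQ n r) (A B : LLM n r) : A * (a • B) = a • (A * B) := by
  ext i j
  simp only [Matrix.mul_apply, Matrix.smul_apply, smul_eq_mul, Finset.mul_sum]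
  exact Finset.sum_congr rfl fun x _ => by ring

omit [NeZero n] in
lemma smul_lie_smul (a b : LLQ n r) (A B : LLM n r) : ⁅a • A, b • B⁆ = (a * b) • ⁅A, B⁆ := by
  rw [Ring.lie_def, Ring.lie_def, msmul_mul, mul_msmul, msmul_mul, mul_msmul]
  ext i j
  simp only [Matrix.smul_apply, Matrix.sub_apply, smul_eq_mul, Matrix.mul_apply]
  ring

omit [NeZero n] in
lemma alg_mul_smul (z : ℂ) (q : LLQ n r) (M : LLM n r) :
    (algebraMap ℂ (LLQ n r) z * q) • M = z • (q • M) := by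
  have h : algebraMap ℂ (LLQ n r) z * q = z • q := (Algebra.smul_def z q).symm
  rw [h]
  exact smul_assoc z q M

omit [NeZero n] in
lemma RMLL_same (i : Fin n) : RMLL n r i i = 0 := sub_self _

omit [NeZero n] in
lemma RMLL_anti (i j : Fin n) : RMLL n r j i = - RMLL n r i j := (neg_sub _ _).symm

lemma Qeven_same (k : ℕ) (i : Fin n) : Qeven n r k i i = 0 := by
  rw [Qeven_eq, RMLL_same, smul_zero]

lemma Qeven_anti (k : ℕ) (i j : Fin n) : Qeven n r k i j = - Qeven n r k j i := by
  rw [Qeven_eq, Qeven_eq, RMLL_anti]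
  ext a b
  simp only [Matrix.smul_apply, Matrix.neg_apply, smul_eq_mul]
  ring

omit [NeZero n] in
lemma lie_SM_SM {a b : Fin n} (h : a ≠ b) : ⁅SMLL n r a, SMLL n r b⁆ = RMLL n r a b := by
  rw [Ring.lie_def, SMLL, SMLL, RMLL]
  simp [add_mul, mul_add, mul_sub, sub_mul, neg_mul, mul_neg, hclLL n, hlcLL n, h, h.symm]
  try abel

omit [NeZero n] in
lemma lie_RM_SM {i j : Fin n} (h : i ≠ j) : ⁅RMLL n r i j, SMLL n r j⁆ = SMLL n r i := by
  rw [Ring.lie_def, SMLL, RMLL, SMLL]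
  simp [add_mul, mul_add, sub_mul, mul_sub, neg_mul, mul_neg, hclLL n, hlcLL n, h, h.symm]
  try abel

omit [NeZero n] in
lemma lie_RM_SM_zero {i j l : Fin n} (hi : l ≠ i) (hj : l ≠ j) :
    ⁅RMLL n r i j, SMLL n r l⁆ = 0 := by
  rw [Ring.lie_def, SMLL, RMLL]
  simp [add_mul, mul_add, sub_mul, mul_sub, neg_mul, mul_neg, hclLL n, hlcLL n, hi, hj,
    hi.symm, hj.symm]
  try abel

omit [NeZero n] in
lemma lie_RM_RM {i j m : Fin n} (hij : i ≠ j) (hjm : j ≠ m) (him : i ≠ m) :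
    ⁅RMLL n r i j, RMLL n r j m⁆ = RMLL n r i m := by
  rw [Ring.lie_def, RMLL, RMLL, RMLL]
  simp [add_mul, mul_add, sub_mul, mul_sub, neg_mul, mul_neg, hij, hjm, him, hij.symm,
    hjm.symm, him.symm]
  try abel

omit [NeZero n] in
lemma lie_RM_RM_zero {i j l m : Fin n} (hil : i ≠ l) (him : i ≠ m) (hjl : j ≠ l)
    (hjm : j ≠ m) : ⁅RMLL n r i j, RMLL n r l m⁆ = 0 := by
  rw [Ring.lie_def, RMLL, RMLL]
  simp [add_mul, mul_add, sub_mul, mul_sub, neg_mul, mul_neg, hil, him, hjl, hjm, hil.symm,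
    him.symm, hjl.symm, hjm.symm]
  try abel

end MatLL

noncomputable section GLL

variable (n : ℕ) (r : Fin n → ℂ) [NeZero n]

lemma G1 (k k' : ℕ) (hk : 1 ≤ k) (hk' : 1 ≤ k') (a b : Fin n) :
    ⁅Qodd n r k a, Qodd n r k' b⁆ = Qeven n r (k+k'-1) a b := by
  by_cases hab : a = b
  · subst hab
    rw [Qodd_eq, Qodd_eq, smul_lie_smul, lie_self, smul_zero, Qeven_same]
  · rw [Qodd_eq, Qodd_eq, Qeven_eq, smul_lie_smul, lie_SM_SM n r hab]
    congr 1
    have e : (k+k'-1)-1 = (k-1)+(k'-1) := by omega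
    rw [e, pow_add]
    ring

lemma G2a (k k' : ℕ) (hk : 1 ≤ k) (hk' : 1 ≤ k') {i j : Fin n} (hij : i ≠ j) :
    ⁅Qeven n r k i j, Qodd n r k' j⁆
      = Qodd n r (k+k') i - r j • Qodd n r (k+k'-1) i := by
  rw [Qeven_eq, Qodd_eq, smul_lie_smul, lie_RM_SM n r hij, Qodd_eq, Qodd_eq]
  have key : (lambar n r ^ (k-1) * lamQ n r i * lamQ n r j) * (lambar n r ^ (k'-1) * lamQ n r j)
      = (lambar n r ^ ((k+k')-1) * lamQ n r i)
        - algebraMap ℂ (LLQ n r) (r j) * (lambar n r ^ ((k+k'-1)-1) * lamQ n r i) := by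
    have h2 : lamQ n r j ^ 2 = lambar n r - algebraMap ℂ (LLQ n r) (r j) := lamQ_sq n r j
    have e1 : (k+k') - 1 = (k-1) + (k'-1) + 1 := by omega
    have e2 : (k+k'-1) - 1 = (k-1) + (k'-1) := by omega
    rw [e2, e1]
    calc (lambar n r ^ (k-1) * lamQ n r i * lamQ n r j) * (lambar n r ^ (k'-1) * lamQ n r j)
        = lambar n r ^ (k-1) * lambar n r ^ (k'-1) * lamQ n r i * lamQ n r j ^ 2 := by ring
      _ = lambar n r ^ (k-1) * lambar n r ^ (k'-1) * lamQ n r i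
            * (lambar n r - algebraMap ℂ (LLQ n r) (r j)) := by rw [h2]
      _ = (lambar n r ^ ((k-1)+(k'-1)+1) * lamQ n r i)
            - algebraMap ℂ (LLQ n r) (r j) * (lambar n r ^ ((k-1)+(k'-1)) * lamQ n r i) := by
            rw [pow_add, pow_add, pow_one]; ring
  rw [key, sub_smul, alg_mul_smul]

lemma G2c (k k' : ℕ) (i j l : Fin n) (hli : l ≠ i) (hlj : l ≠ j) :
    ⁅Qeven n r k i j, Qodd n r k' l⁆ = 0 := by
  rw [Qeven_eq, Qodd_eq, smul_lie_smul, lie_RM_SM_zero n r hli hlj, smul_zero]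

lemma G3a (k k' : ℕ) (hk : 1 ≤ k) (hk' : 1 ≤ k') {i j m : Fin n} (hij : i ≠ j) (hjm : j ≠ m)
    (him : i ≠ m) :
    ⁅Qeven n r k i j, Qeven n r k' j m⁆
      = Qeven n r (k+k') i m - r j • Qeven n r (k+k'-1) i m := by
  rw [Qeven_eq, Qeven_eq, smul_lie_smul, lie_RM_RM n r hij hjm him, Qeven_eq, Qeven_eq]
  have key : (lambar n r ^ (k-1) * lamQ n r i * lamQ n r j)
        * (lambar n r ^ (k'-1) * lamQ n r j * lamQ n r m)
      = (lambar n r ^ ((k+k')-1) * lamQ n r i * lamQ n r m)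
        - algebraMap ℂ (LLQ n r) (r j)
          * (lambar n r ^ ((k+k'-1)-1) * lamQ n r i * lamQ n r m) := by
    have h2 : lamQ n r j ^ 2 = lambar n r - algebraMap ℂ (LLQ n r) (r j) := lamQ_sq n r j
    have e1 : (k+k') - 1 = (k-1) + (k'-1) + 1 := by omega
    have e2 : (k+k'-1) - 1 = (k-1) + (k'-1) := by omega
    rw [e2, e1]
    calc (lambar n r ^ (k-1) * lamQ n r i * lamQ n r j)
          * (lambar n r ^ (k'-1) * lamQ n r j * lamQ n r m)
        = lambar n r ^ (k-1) * lambar n r ^ (k'-1) * lamQ n r i * lamQ n r m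
            * lamQ n r j ^ 2 := by ring
      _ = lambar n r ^ (k-1) * lambar n r ^ (k'-1) * lamQ n r i * lamQ n r m
            * (lambar n r - algebraMap ℂ (LLQ n r) (r j)) := by rw [h2]
      _ = (lambar n r ^ ((k-1)+(k'-1)+1) * lamQ n r i * lamQ n r m)
            - algebraMap ℂ (LLQ n r) (r j)
              * (lambar n r ^ ((k-1)+(k'-1)) * lamQ n r i * lamQ n r m) := by
            rw [pow_add, pow_add, pow_one]; ring
  rw [key, sub_smul]
  congr 1
  exact alg_mul_smul n r _ _ _

lemma G3b (k k' : ℕ) {i j l m : Fin n} (hil : i ≠ l) (him : i ≠ m) (hjl : j ≠ l)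
    (hjm : j ≠ m) : ⁅Qeven n r k i j, Qeven n r k' l m⁆ = 0 := by
  rw [Qeven_eq, Qeven_eq, smul_lie_smul, lie_RM_RM_zero n r hil him hjl hjm, smul_zero]

lemma G3c (k k' : ℕ) (i j : Fin n) : ⁅Qeven n r k i j, Qeven n r k' i j⁆ = 0 := by
  rw [Qeven_eq, Qeven_eq, smul_lie_smul, lie_self, smul_zero]

/- entry lemmas -/

lemma Qodd_apply_oddpos (k : ℕ) (l b : Fin n) :
    Qodd n r k l b.castSucc (Fin.last n)
      = if l = b then lambar n r ^ (k-1) * lamQ n r b else 0 := by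
  by_cases h : l = b
  · subst h
    simp [Qodd, Matrix.smul_apply, Matrix.add_apply, hlcLL n, smul_eq_mul]
  · have h1 : l.castSucc ≠ b.castSucc := by simpa [Fin.castSucc_inj] using h
    simp [Qodd, Matrix.smul_apply, Matrix.add_apply, h, h1, hlcLL n]

lemma Qodd_apply_evenpos (k : ℕ) (l i j : Fin n) :
    Qodd n r k l i.castSucc j.castSucc = 0 := by
  simp [Qodd, Matrix.smul_apply, Matrix.add_apply, hclLL n, hlcLL n]

lemma Qeven_apply_oddpos (k : ℕ) (i j b : Fin n) :
    Qeven n r k i j b.castSucc (Fin.last n) = 0 := by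
  simp [Qeven, Matrix.smul_apply, Matrix.sub_apply, hclLL n]

lemma Qeven_apply_evenpos (k : ℕ) {a b i j : Fin n} (hab : a < b) (hij : i < j) :
    Qeven n r k a b i.castSucc j.castSucc
      = if a = i ∧ b = j then lambar n r ^ (k-1) * lamQ n r i * lamQ n r j else 0 := by
  have hba0 : ¬ (b = i ∧ a = j) := by
    rintro ⟨rfl, rfl⟩
    exact absurd (hab.trans hij) (lt_irrefl _)
  by_cases h : a = i ∧ b = j
  · obtain ⟨rfl, rfl⟩ := h
    have hba2 : b.castSucc ≠ a.castSucc := by simpa [Fin.castSucc_inj] using hab.ne'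
    simp [Qeven, Matrix.smul_apply, Matrix.sub_apply, hba2, smul_eq_mul]
  · simp [Qeven, Matrix.smul_apply, Matrix.sub_apply, h, hba0, Fin.castSucc_inj, smul_eq_mul]

abbrev PairLT (n : ℕ) := {p : Fin n × Fin n // p.1 < p.2}

lemma entry_sum_odd (k : ℕ) (cc : Fin n → ℂ) (l : Fin n) :
    (∑ l', cc l' • Qodd n r k l') l.castSucc (Fin.last n)
      = cc l • (lambar n r ^ (k-1) * lamQ n r l) := by
  rw [Matrix.sum_apply]
  rw [Finset.sum_congr rfl (fun l' _ => by
    rw [Matrix.smul_apply, Qodd_apply_oddpos, smul_ite, smul_zero])]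
  rw [Finset.sum_ite_eq' Finset.univ l (fun l' => cc l' • (lambar n r ^ (k-1) * lamQ n r l))]
  simp

lemma entry_sum_even (k : ℕ) (dd : PairLT n → ℂ) {i j : Fin n} (hij : i < j) :
    (∑ p : PairLT n, dd p • Qeven n r k p.1.1 p.1.2) i.castSucc j.castSucc
      = dd ⟨(i,j), hij⟩ • (lambar n r ^ (k-1) * lamQ n r i * lamQ n r j) := by
  rw [Matrix.sum_apply]
  have hcond : ∀ p : PairLT n, (p.1.1 = i ∧ p.1.2 = j) ↔ p = ⟨(i,j), hij⟩ := by
    intro p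
    constructor
    · rintro ⟨h1, h2⟩; exact Subtype.ext (Prod.ext h1 h2)
    · rintro rfl; exact ⟨rfl, rfl⟩
  rw [Finset.sum_congr rfl (fun p _ => by
    rw [Matrix.smul_apply, Qeven_apply_evenpos n r k p.2 hij, smul_ite, smul_zero, if_congr
      (hcond p) rfl rfl])]
  rw [Finset.sum_ite_eq' Finset.univ (⟨(i,j), hij⟩ : PairLT n)
    (fun p => dd p • (lambar n r ^ (k-1) * lamQ n r i * lamQ n r j))]
  simp

end GLL

noncomputable section FamLL

variable (n : ℕ) (r : Fin n → ℂ) [NeZero n]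

lemma csmul_eq_zero {a : ℂ} {q : LLQ n r} (h : a • q = 0) (hq : q ≠ 0) : a = 0 := by
  by_contra ha
  apply hq
  have := congrArg (fun x => a⁻¹ • x) h
  simpa [smul_smul, inv_mul_cancel₀ ha] using this

lemma liOdd (k : ℕ) : LinearIndependent ℂ (Qodd n r k) := by
  rw [Fintype.linearIndependent_iff]
  intro g hg l
  have hE := congrArg (fun M : LLM n r => M l.castSucc (Fin.last n)) hg
  simp only [Matrix.zero_apply] at hE
  rw [entry_sum_odd] at hE
  exact csmul_eq_zero n r hE (coeff_odd_ne n r k l)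

lemma liEven (k : ℕ) :
    LinearIndependent ℂ (fun p : PairLT n => Qeven n r k p.1.1 p.1.2) := by
  rw [Fintype.linearIndependent_iff]
  intro g hg p
  have hE := congrArg (fun M : LLM n r => M p.1.1.castSucc p.1.2.castSucc) hg
  simp only [Matrix.zero_apply] at hE
  rw [entry_sum_even n r k g p.2] at hE
  have : (⟨(p.1.1, p.1.2), p.2⟩ : PairLT n) = p := by
    apply Subtype.ext; rfl
  rw [this] at hE
  exact csmul_eq_zero n r hE (coeff_even_ne n r k p.1.1 p.1.2)

lemma oddSetEq (k : ℕ) : {y | ∃ l : Fin n, y = Qodd n r k l} = Set.range (Qodd n r k) := by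
  ext y
  exact ⟨fun ⟨l, h⟩ => ⟨l, h.symm⟩, fun ⟨l, h⟩ => ⟨l, h.symm⟩⟩

lemma evenSetEq (k : ℕ) : {y | ∃ i j : Fin n, i < j ∧ y = Qeven n r k i j}
    = Set.range (fun p : PairLT n => Qeven n r k p.1.1 p.1.2) := by
  ext y
  constructor
  · rintro ⟨i, j, hij, rfl⟩; exact ⟨⟨(i,j), hij⟩, rfl⟩
  · rintro ⟨p, rfl⟩; exact ⟨p.1.1, p.1.2, p.2, rfl⟩

lemma cardPairLT : Fintype.card (PairLT n) = n * (n-1) / 2 := by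
  have e : PairLT n ≃ Σ j : Fin n, Fin j.val :=
    { toFun := fun x => ⟨x.1.2, ⟨x.1.1.val, x.2⟩⟩
      invFun := fun x => ⟨(⟨x.2.val, lt_trans x.2.isLt x.1.isLt⟩, x.1), x.2.isLt⟩
      left_inv := fun x => by
        apply Subtype.ext
        apply Prod.ext <;> simp
      right_inv := fun x => by
        apply Sigma.ext <;> simp }
  rw [Fintype.card_congr e, Fintype.card_sigma]
  simp only [Fintype.card_fin]
  rw [Fin.sum_univ_eq_sum_range (fun i => i) n]
  exact Finset.sum_range_id n

end FamLL

noncomputable section LieManip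

variable (n : ℕ) (r : Fin n → ℂ) [NeZero n]

omit [NeZero n] in
lemma csmul_eqLL (c : ℂ) (B : LLM n r) : c • B = (algebraMap ℂ (LLQ n r) c) • B := by
  ext i j
  simp only [Matrix.smul_apply, smul_eq_mul]
  exact Algebra.smul_def c (B i j)

omit [NeZero n] in
lemma mylie_zero (A : LLM n r) : ⁅A, (0 : LLM n r)⁆ = 0 := by
  rw [Ring.lie_def, mul_zero, zero_mul, sub_zero]

omit [NeZero n] in
lemma myzero_lie (A : LLM n r) : ⁅(0 : LLM n r), A⁆ = 0 := by
  rw [Ring.lie_def, mul_zero, zero_mul, sub_zero]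

omit [NeZero n] in
lemma mylie_add (A B C : LLM n r) : ⁅A, B + C⁆ = ⁅A, B⁆ + ⁅A, C⁆ := by
  rw [Ring.lie_def, Ring.lie_def, Ring.lie_def, mul_add, add_mul]
  abel

omit [NeZero n] in
lemma myadd_lie (A B C : LLM n r) : ⁅A + B, C⁆ = ⁅A, C⁆ + ⁅B, C⁆ := by
  rw [Ring.lie_def, Ring.lie_def, Ring.lie_def, mul_add, add_mul]
  abel

omit [NeZero n] in
lemma mylie_neg (A B : LLM n r) : ⁅A, -B⁆ = -⁅A, B⁆ := by
  rw [Ring.lie_def, Ring.lie_def, Matrix.mul_neg, Matrix.neg_mul]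
  abel

omit [NeZero n] in
lemma myneg_lie (A B : LLM n r) : ⁅-A, B⁆ = -⁅A, B⁆ := by
  rw [Ring.lie_def, Ring.lie_def, Matrix.neg_mul, Matrix.mul_neg]
  abel

omit [NeZero n] in
lemma myskew (A B : LLM n r) : ⁅A, B⁆ = -⁅B, A⁆ := by
  rw [Ring.lie_def, Ring.lie_def]
  abel

omit [NeZero n] in
lemma myqsmul_lie (q : LLQ n r) (A B : LLM n r) : ⁅q • A, B⁆ = q • ⁅A, B⁆ := by
  rw [Ring.lie_def, Ring.lie_def, msmul_mul, mul_msmul]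
  ext i j
  simp only [Matrix.smul_apply, Matrix.sub_apply, smul_eq_mul]
  ring

omit [NeZero n] in
lemma mylie_qsmul (q : LLQ n r) (A B : LLM n r) : ⁅A, q • B⁆ = q • ⁅A, B⁆ := by
  rw [Ring.lie_def, Ring.lie_def, msmul_mul, mul_msmul]
  ext i j
  simp only [Matrix.smul_apply, Matrix.sub_apply, smul_eq_mul]
  ring

omit [NeZero n] in
lemma mycsmul_lie (c : ℂ) (A B : LLM n r) : ⁅c • A, B⁆ = c • ⁅A, B⁆ := by
  rw [csmul_eqLL n r c A, myqsmul_lie, ← csmul_eqLL]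

omit [NeZero n] in
lemma mylie_csmul (c : ℂ) (A B : LLM n r) : ⁅A, c • B⁆ = c • ⁅A, B⁆ := by
  rw [csmul_eqLL n r c B, mylie_qsmul, ← csmul_eqLL]

end LieManip


theorem stmt_9 (n : ℕ) [NeZero n] (hn : 3 ≤ n) (r : Fin n → ℂ) (hr : Function.Injective r)
    (Lbar : ℕ → Submodule ℂ (LLM n r))
    (hLbar0 : Lbar 0 = ⊥)
    (hLbarOdd : ∀ k : ℕ, 1 ≤ k →
      Lbar (2*k - 1) = Submodule.span ℂ {y | ∃ l : Fin n, y = Qodd n r k l})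
    (hLbarEven : ∀ k : ℕ, 1 ≤ k →
      Lbar (2*k) = Submodule.span ℂ {y | ∃ i j : Fin n, i < j ∧ y = Qeven n r k i j}) :
    -- L(n) is the (direct) sum of the Lbar m
    (∀ x : LLM n r,
        x ∈ LieSubalgebra.lieSpan ℂ (LLM n r) (Set.range (Qgen n r)) ↔ x ∈ ⨆ m, Lbar m) ∧
    iSupIndep Lbar ∧
    -- quasigraded structure
    (∀ i j : ℕ, 1 ≤ i → 1 ≤ j → ∀ x ∈ Lbar i, ∀ y ∈ Lbar j,
        ⁅x, y⁆ ∈ Lbar (i + j) ⊔ Lbar (i + j - 2)) ∧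
    -- dimensions
    (∀ k : ℕ, 1 ≤ k → Module.finrank ℂ (Lbar (2*k - 1)) = n ∧
        Module.finrank ℂ (Lbar (2*k)) = n * (n-1) / 2) := by
  classical
  have hparity : ∀ m : ℕ, 1 ≤ m → (∃ k, 1 ≤ k ∧ m = 2*k-1) ∨ (∃ k, 1 ≤ k ∧ m = 2*k) := by
    intro m hm
    rcases Nat.even_or_odd m with ⟨k, hk⟩ | ⟨k, hk⟩
    · exact Or.inr ⟨k, by omega, by omega⟩
    · exact Or.inl ⟨k+1, by omega, by omega⟩
  have memOdd : ∀ k, 1 ≤ k → ∀ l, Qodd n r k l ∈ Lbar (2*k-1) := by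
    intro k hk l; rw [hLbarOdd k hk]; exact Submodule.subset_span ⟨l, rfl⟩
  have memEven : ∀ k, 1 ≤ k → ∀ i j, Qeven n r k i j ∈ Lbar (2*k) := by
    intro k hk i j
    rw [hLbarEven k hk]
    rcases lt_trichotomy i j with h | h | h
    · exact Submodule.subset_span ⟨i, j, h, rfl⟩
    · rw [h, Qeven_same]; exact zero_mem _
    · rw [Qeven_anti]; exact neg_mem (Submodule.subset_span ⟨j, i, h, rfl⟩)
  -- bracket membership lemmas
  have brkOO : ∀ k k', 1 ≤ k → 1 ≤ k' → ∀ a b : Fin n,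
      ⁅Qodd n r k a, Qodd n r k' b⁆ ∈ Lbar ((2*k-1) + (2*k'-1)) := by
    intro k k' hk hk' a b
    rw [G1 n r k k' hk hk' a b]
    have e : (2*k-1) + (2*k'-1) = 2*(k+k'-1) := by omega
    rw [e]
    exact memEven (k+k'-1) (by omega) a b
  have brkEO : ∀ k k', 1 ≤ k → 1 ≤ k' → ∀ i j l : Fin n, i ≠ j →
      ⁅Qeven n r k i j, Qodd n r k' l⁆
        ∈ Lbar (2*k + (2*k'-1)) ⊔ Lbar (2*k + (2*k'-1) - 2) := by
    intro k k' hk hk' i j l hij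
    have e1 : 2*k + (2*k'-1) = 2*(k+k')-1 := by omega
    have e2 : 2*k + (2*k'-1) - 2 = 2*(k+k'-1)-1 := by omega
    rw [e2, e1]
    by_cases hlj : l = j
    · subst hlj
      rw [G2a n r k k' hk hk' hij]
      exact sub_mem (Submodule.mem_sup_left (memOdd (k+k') (by omega) i))
        (Submodule.mem_sup_right (Submodule.smul_mem _ _ (memOdd (k+k'-1) (by omega) i)))
    · by_cases hli : l = i
      · subst hli
        rw [Qeven_anti, myneg_lie, G2a n r k k' hk hk' (Ne.symm hij)]
        exact neg_mem (sub_mem (Submodule.mem_sup_left (memOdd (k+k') (by omega) j))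
          (Submodule.mem_sup_right (Submodule.smul_mem _ _ (memOdd (k+k'-1) (by omega) j))))
      · rw [G2c n r k k' i j l hli hlj]
        exact zero_mem _
  have brkEE : ∀ k k', 1 ≤ k → 1 ≤ k' → ∀ i j l m : Fin n, i ≠ j → l ≠ m →
      ⁅Qeven n r k i j, Qeven n r k' l m⁆
        ∈ Lbar (2*k + 2*k') ⊔ Lbar (2*k + 2*k' - 2) := by
    intro k k' hk hk' i j l m hij hlm
    have e1 : 2*k + 2*k' = 2*(k+k') := by omega
    have e2 : 2*k + 2*k' - 2 = 2*(k+k'-1) := by omega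
    rw [e2, e1]
    by_cases h1 : i = l ∧ j = m
    · obtain ⟨rfl, rfl⟩ := h1
      rw [G3c]; exact zero_mem _
    · by_cases h2 : i = m ∧ j = l
      · obtain ⟨rfl, rfl⟩ := h2
        rw [show Qeven n r k' j i = - Qeven n r k' i j from Qeven_anti n r k' j i, mylie_neg,
          G3c, neg_zero]
        exact zero_mem _
      · by_cases h3 : j = l
        · subst h3
          have hjm : j ≠ m := hlm
          have him : i ≠ m := fun hc => h2 ⟨hc, rfl⟩
          rw [G3a n r k k' hk hk' hij hjm him]
          exact sub_mem (Submodule.mem_sup_left (memEven (k+k') (by omega) i m))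
            (Submodule.mem_sup_right (Submodule.smul_mem _ _ (memEven (k+k'-1) (by omega) i m)))
        · by_cases h4 : i = m
          · subst h4
            have hil : i ≠ l := fun hc => hlm hc.symm
            rw [show Qeven n r k i j = - Qeven n r k j i from Qeven_anti n r k i j,
              show Qeven n r k' l i = - Qeven n r k' i l from Qeven_anti n r k' l i,
              myneg_lie, mylie_neg, neg_neg,
              G3a n r k k' hk hk' (Ne.symm hij) hil h3]
            exact sub_mem (Submodule.mem_sup_left (memEven (k+k') (by omega) j l))
              (Submodule.mem_sup_right (Submodule.smul_mem _ _
                (memEven (k+k'-1) (by omega) j l)))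
          · by_cases h5 : i = l
            · subst h5
              have hjm : j ≠ m := fun hc => h1 ⟨rfl, hc⟩
              have him : i ≠ m := hlm
              rw [show Qeven n r k i j = - Qeven n r k j i from Qeven_anti n r k i j, myneg_lie,
                G3a n r k k' hk hk' (Ne.symm hij) him hjm]
              exact neg_mem (sub_mem (Submodule.mem_sup_left (memEven (k+k') (by omega) j m))
                (Submodule.mem_sup_right (Submodule.smul_mem _ _
                  (memEven (k+k'-1) (by omega) j m))))
            · by_cases h6 : j = m
              · subst h6
                rw [show Qeven n r k' l j = - Qeven n r k' j l from Qeven_anti n r k' l j,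
                  mylie_neg, G3a n r k k' hk hk' hij h3 h5]
                exact neg_mem (sub_mem (Submodule.mem_sup_left (memEven (k+k') (by omega) i l))
                  (Submodule.mem_sup_right (Submodule.smul_mem _ _
                    (memEven (k+k'-1) (by omega) i l))))
              · rw [G3b n r k k' h5 h4 h3 h6]
                exact zero_mem _
  -- span induction helper
  have nest : ∀ (SA SB : Set (LLM n r)) (N : Submodule ℂ (LLM n r)),
      (∀ u ∈ SA, ∀ v ∈ SB, ⁅u, v⁆ ∈ N) →
      ∀ u ∈ Submodule.span ℂ SA, ∀ v ∈ Submodule.span ℂ SB, ⁅u, v⁆ ∈ N := by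
    intro SA SB N hgen u hu
    refine Submodule.span_induction
      (p := fun u _ => ∀ v ∈ Submodule.span ℂ SB, ⁅u, v⁆ ∈ N) ?_ ?_ ?_ ?_ hu
    · intro u hus v hv
      refine Submodule.span_induction (p := fun v _ => ⁅u, v⁆ ∈ N)
        (fun v hvs => hgen u hus v hvs) ?_ ?_ ?_ hv
      · show ⁅u, (0 : LLM n r)⁆ ∈ N
        rw [mylie_zero]; exact N.zero_mem
      · intro a b _ _ ha hb
        show ⁅u, a + b⁆ ∈ N
        rw [mylie_add]; exact N.add_mem ha hb
      · intro c a _ hc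
        show ⁅u, c • a⁆ ∈ N
        rw [mylie_csmul]; exact N.smul_mem c hc
    · intro v _
      show ⁅(0 : LLM n r), v⁆ ∈ N
      rw [myzero_lie]; exact N.zero_mem
    · intro a b _ _ ha hb v hv
      show ⁅a + b, v⁆ ∈ N
      rw [myadd_lie]; exact N.add_mem (ha v hv) (hb v hv)
    · intro c a _ ha v hv
      show ⁅c • a, v⁆ ∈ N
      rw [mycsmul_lie]; exact N.smul_mem c (ha v hv)
  -- quasigrading
  have quasi : ∀ i j : ℕ, 1 ≤ i → 1 ≤ j → ∀ x ∈ Lbar i, ∀ y ∈ Lbar j,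
      ⁅x, y⁆ ∈ Lbar (i + j) ⊔ Lbar (i + j - 2) := by
    intro i j hi hj x hx y hy
    rcases hparity i hi with ⟨k, hk, rfl⟩ | ⟨k, hk, rfl⟩ <;>
      rcases hparity j hj with ⟨k', hk', rfl⟩ | ⟨k', hk', rfl⟩
    · rw [hLbarOdd k hk] at hx
      rw [hLbarOdd k' hk'] at hy
      refine nest _ _ _ ?_ x hx y hy
      rintro u ⟨a, rfl⟩ v ⟨b, rfl⟩
      exact Submodule.mem_sup_left (brkOO k k' hk hk' a b)
    · rw [hLbarOdd k hk] at hx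
      rw [hLbarEven k' hk'] at hy
      refine nest _ _ _ ?_ x hx y hy
      rintro u ⟨a, rfl⟩ v ⟨c, d, hcd, rfl⟩
      rw [myskew n r]
      refine neg_mem ?_
      have := brkEO k' k hk' hk c d a hcd.ne
      have e1 : 2*k' + (2*k-1) = (2*k-1) + 2*k' := by omega
      have e2 : 2*k' + (2*k-1) - 2 = (2*k-1) + 2*k' - 2 := by omega
      rwa [e2, e1] at this
    · rw [hLbarEven k hk] at hx
      rw [hLbarOdd k' hk'] at hy
      refine nest _ _ _ ?_ x hx y hy
      rintro u ⟨a, b, hab, rfl⟩ v ⟨l, rfl⟩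
      exact brkEO k k' hk hk' a b l hab.ne
    · rw [hLbarEven k hk] at hx
      rw [hLbarEven k' hk'] at hy
      refine nest _ _ _ ?_ x hx y hy
      rintro u ⟨a, b, hab, rfl⟩ v ⟨c, d, hcd, rfl⟩
      exact brkEE k k' hk hk' a b c d hab.ne hcd.ne
  -- representation lemmas
  have hrepOdd : ∀ m, m % 2 = 1 → ∀ x ∈ Lbar m,
      ∃ cc : Fin n → ℂ, x = ∑ l, cc l • Qodd n r ((m+1)/2) l := by
    intro m hm x hx
    have hk : 1 ≤ (m+1)/2 := by omega
    have hmeq : 2*((m+1)/2) - 1 = m := by omega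
    rw [← hmeq, hLbarOdd _ hk, oddSetEq] at hx
    obtain ⟨cc, hcc⟩ := (Submodule.mem_span_range_iff_exists_fun ℂ).mp hx
    exact ⟨cc, hcc.symm⟩
  have hrepEven : ∀ m, m % 2 = 0 → 1 ≤ m → ∀ x ∈ Lbar m,
      ∃ dd : PairLT n → ℂ, x = ∑ p, dd p • Qeven n r (m/2) p.1.1 p.1.2 := by
    intro m hm hm1 x hx
    have hk : 1 ≤ m/2 := by omega
    have hmeq : 2*(m/2) = m := by omega
    rw [← hmeq, hLbarEven _ hk, evenSetEq] at hx
    obtain ⟨dd, hdd⟩ := (Submodule.mem_span_range_iff_exists_fun ℂ).mp hx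
    exact ⟨dd, hdd.symm⟩
  have hOddEntryZero : ∀ m, m % 2 = 1 → ∀ x ∈ Lbar m, ∀ i j : Fin n,
      x i.castSucc j.castSucc = 0 := by
    intro m hm x hx i j
    obtain ⟨cc, rfl⟩ := hrepOdd m hm x hx
    rw [Matrix.sum_apply]
    simp [Matrix.smul_apply, Qodd_apply_evenpos]
  have hEvenEntryZero : ∀ m, m % 2 = 0 → 1 ≤ m → ∀ x ∈ Lbar m, ∀ l : Fin n,
      x l.castSucc (Fin.last n) = 0 := by
    intro m hm hm1 x hx l
    obtain ⟨dd, rfl⟩ := hrepEven m hm hm1 x hx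
    rw [Matrix.sum_apply]
    simp [Matrix.smul_apply, Qeven_apply_oddpos]
  have hOddEntry : ∀ m, m % 2 = 1 → ∀ x ∈ Lbar m, ∀ l : Fin n,
      ∃ a : ℂ, x l.castSucc (Fin.last n) = a • (lambar n r ^ (m/2) * lamQ n r l) := by
    intro m hm x hx l
    obtain ⟨cc, rfl⟩ := hrepOdd m hm x hx
    refine ⟨cc l, ?_⟩
    rw [entry_sum_odd, show ((m+1)/2 : ℕ) - 1 = m/2 from by omega]
  have hEvenEntry : ∀ m, m % 2 = 0 → 1 ≤ m → ∀ x ∈ Lbar m, ∀ (i j : Fin n), i < j →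
      ∃ a : ℂ, x i.castSucc j.castSucc
        = a • (lambar n r ^ (m/2 - 1) * (lamQ n r i * lamQ n r j)) := by
    intro m hm hm1 x hx i j hij
    obtain ⟨dd, rfl⟩ := hrepEven m hm hm1 x hx
    exact ⟨dd ⟨(i,j), hij⟩, by rw [entry_sum_even n r _ dd hij, mul_assoc]⟩
  -- zero-sum lemma
  have Z : ∀ (F : Finset ℕ) (g : ℕ → LLM n r), (∀ m ∈ F, g m ∈ Lbar m) →
      ∑ m ∈ F, g m = 0 → ∀ m ∈ F, g m = 0 := by
    intro F g hg hsum m0 hm0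
    rcases Nat.eq_zero_or_pos m0 with rfl | hm1
    · have := hg 0 hm0; rw [hLbar0, Submodule.mem_bot] at this; exact this
    by_cases hpar : m0 % 2 = 1
    · have hent : ∀ l : Fin n, (g m0) l.castSucc (Fin.last n) = 0 := by
        intro l
        have hsub : ∑ m ∈ F.filter (fun m => m % 2 = 1),
            (g m) l.castSucc (Fin.last n) = 0 := by
          have htot : ∑ m ∈ F, (g m) l.castSucc (Fin.last n) = 0 := by
            have := congrArg (fun M : LLM n r => M l.castSucc (Fin.last n)) hsum
            simpa [Matrix.sum_apply] using this
          rw [← htot]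
          apply Finset.sum_filter_of_ne
          intro m hm hne
          by_contra hodd
          apply hne
          rcases Nat.eq_zero_or_pos m with rfl | hm1'
          · have := hg 0 hm; rw [hLbar0, Submodule.mem_bot] at this; rw [this]; simp
          · exact hEvenEntryZero m (by omega) hm1' _ (hg m hm) l
        have hex : ∀ m ∈ F.filter (fun m => m % 2 = 1), ∃ a : ℂ,
            (g m) l.castSucc (Fin.last n) = a • (lambar n r ^ (m/2) * lamQ n r l) := by
          intro m hm
          have hmm := Finset.mem_filter.mp hm
          exact hOddEntry m hmm.2 _ (hg m hmm.1) l
        choose! a ha using hex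
        have hsum2 : ∑ m ∈ F.filter (fun m => m % 2 = 1),
            a m • (lambar n r ^ (m/2) * lamQ n r l) = 0 := by
          rw [← hsub]; exact (Finset.sum_congr rfl fun m hm => (ha m hm).symm)
        have hinj : Set.InjOn (fun m => m/2) (F.filter (fun m => m % 2 = 1)) := by
          intro x hx y hy hxy
          simp only [Finset.coe_filter, Set.mem_setOf_eq] at hx hy
          simp only at hxy
          omega
        have hzero := li_core n r (hw_odd n r l) _ _ hinj a hsum2
        have hm0F1 : m0 ∈ F.filter (fun m => m % 2 = 1) :=
          Finset.mem_filter.mpr ⟨hm0, hpar⟩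
        rw [ha m0 hm0F1, hzero m0 hm0F1, zero_smul]
      obtain ⟨cc, hcc⟩ := hrepOdd m0 hpar _ (hg m0 hm0)
      have hccz : ∀ l, cc l = 0 := by
        intro l
        have h := hent l
        rw [hcc, entry_sum_odd] at h
        exact csmul_eq_zero n r h (coeff_odd_ne n r _ l)
      rw [hcc]
      simp [hccz]
    · have hpar0 : m0 % 2 = 0 := by omega
      have hent : ∀ (i j : Fin n), i < j → (g m0) i.castSucc j.castSucc = 0 := by
        intro i j hij
        have hsub : ∑ m ∈ F.filter (fun m => m % 2 = 0 ∧ 1 ≤ m),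
            (g m) i.castSucc j.castSucc = 0 := by
          have htot : ∑ m ∈ F, (g m) i.castSucc j.castSucc = 0 := by
            have := congrArg (fun M : LLM n r => M i.castSucc j.castSucc) hsum
            simpa [Matrix.sum_apply] using this
          rw [← htot]
          apply Finset.sum_filter_of_ne
          intro m hm hne
          by_contra hcon
          apply hne
          rcases Nat.eq_zero_or_pos m with rfl | hm1'
          · have := hg 0 hm; rw [hLbar0, Submodule.mem_bot] at this; rw [this]; simp
          · have hodd : m % 2 = 1 := by omega
            exact hOddEntryZero m hodd _ (hg m hm) i j
        have hex : ∀ m ∈ F.filter (fun m => m % 2 = 0 ∧ 1 ≤ m), ∃ a : ℂ,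
            (g m) i.castSucc j.castSucc
              = a • (lambar n r ^ (m/2 - 1) * (lamQ n r i * lamQ n r j)) := by
          intro m hm
          have hmm := Finset.mem_filter.mp hm
          exact hEvenEntry m hmm.2.1 hmm.2.2 _ (hg m hmm.1) i j hij
        choose! a ha using hex
        have hsum2 : ∑ m ∈ F.filter (fun m => m % 2 = 0 ∧ 1 ≤ m),
            a m • (lambar n r ^ (m/2 - 1) * (lamQ n r i * lamQ n r j)) = 0 := by
          rw [← hsub]; exact (Finset.sum_congr rfl fun m hm => (ha m hm).symm)
        have hinj : Set.InjOn (fun m => m/2 - 1)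
            (F.filter (fun m => m % 2 = 0 ∧ 1 ≤ m)) := by
          intro x hx y hy hxy
          simp only [Finset.coe_filter, Set.mem_setOf_eq] at hx hy
          simp only at hxy
          omega
        have hzero := li_core n r (hw_even n r i j) _ _ hinj a hsum2
        have hm0F2 : m0 ∈ F.filter (fun m => m % 2 = 0 ∧ 1 ≤ m) :=
          Finset.mem_filter.mpr ⟨hm0, hpar0, hm1⟩
        rw [ha m0 hm0F2, hzero m0 hm0F2, zero_smul]
      obtain ⟨dd, hdd⟩ := hrepEven m0 hpar0 hm1 _ (hg m0 hm0)
      have hddz : ∀ p : PairLT n, dd p = 0 := by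
        intro p
        have h := hent p.1.1 p.1.2 p.2
        rw [hdd, entry_sum_even n r _ dd p.2] at h
        have hp : (⟨(p.1.1, p.1.2), p.2⟩ : PairLT n) = p := Subtype.ext rfl
        rw [hp] at h
        exact csmul_eq_zero n r h (coeff_even_ne n r _ p.1.1 p.1.2)
      rw [hdd]
      simp [hddz]
  -- supremum is bracket-closed
  have hsupclosed : ∀ x ∈ (⨆ m, Lbar m : Submodule ℂ (LLM n r)),
      ∀ y ∈ (⨆ m, Lbar m : Submodule ℂ (LLM n r)),
      ⁅x, y⁆ ∈ (⨆ m, Lbar m : Submodule ℂ (LLM n r)) := by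
    intro x hx
    refine Submodule.iSup_induction Lbar
      (motive := fun x => ∀ y ∈ (⨆ m, Lbar m : Submodule ℂ (LLM n r)),
        ⁅x, y⁆ ∈ (⨆ m, Lbar m : Submodule ℂ (LLM n r))) hx ?_ ?_ ?_
    · intro i x hxi y hy
      refine Submodule.iSup_induction Lbar
        (motive := fun y => ⁅x, y⁆ ∈ (⨆ m, Lbar m : Submodule ℂ (LLM n r))) hy ?_ ?_ ?_
      · intro j y hyj
        show ⁅x, y⁆ ∈ (⨆ m, Lbar m : Submodule ℂ (LLM n r))
        rcases Nat.eq_zero_or_pos i with rfl | hi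
        · rw [hLbar0, Submodule.mem_bot] at hxi; rw [hxi, myzero_lie]; exact zero_mem _
        rcases Nat.eq_zero_or_pos j with rfl | hj
        · rw [hLbar0, Submodule.mem_bot] at hyj; rw [hyj, mylie_zero]; exact zero_mem _
        exact (sup_le (le_iSup Lbar (i+j)) (le_iSup Lbar (i+j-2)))
          (quasi i j hi hj x hxi y hyj)
      · show ⁅x, (0 : LLM n r)⁆ ∈ (⨆ m, Lbar m : Submodule ℂ (LLM n r))
        rw [mylie_zero]; exact zero_mem _
      · intro y1 y2 h1 h2
        show ⁅x, y1 + y2⁆ ∈ (⨆ m, Lbar m : Submodule ℂ (LLM n r))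
        rw [mylie_add]; exact add_mem h1 h2
    · intro y _
      show ⁅(0 : LLM n r), y⁆ ∈ (⨆ m, Lbar m : Submodule ℂ (LLM n r))
      rw [myzero_lie]; exact zero_mem _
    · intro x1 x2 h1 h2 y hy
      show ⁅x1 + x2, y⁆ ∈ (⨆ m, Lbar m : Submodule ℂ (LLM n r))
      rw [myadd_lie]; exact add_mem (h1 y hy) (h2 y hy)
  set S := LieSubalgebra.lieSpan ℂ (LLM n r) (Set.range (Qgen n r)) with hS
  have hodd1 : ∀ l, Qodd n r 1 l ∈ S := fun l => by
    rw [← Qgen_eq_Qodd]; exact LieSubalgebra.subset_lieSpan ⟨l, rfl⟩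
  have hOddAll : ∀ k, 1 ≤ k → ∀ l, Qodd n r k l ∈ S := by
    intro k hk
    induction k, hk using Nat.le_induction with
    | base => exact hodd1
    | succ k hk IH =>
      intro l
      obtain ⟨j0, hj0⟩ : ∃ j0 : Fin n, j0 ≠ l := by
        by_cases h : l = ⟨0, by omega⟩
        · exact ⟨⟨1, by omega⟩, by rw [h]; simp [Fin.ext_iff]⟩
        · exact ⟨⟨0, by omega⟩, fun hc => h hc.symm⟩
      have hEv : Qeven n r k l j0 ∈ S := by
        have hG := G1 n r k 1 hk le_rfl l j0
        rw [Nat.add_sub_cancel] at hG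
        rw [← hG]
        exact S.lie_mem (IH l) (hodd1 j0)
      have hG2 := G2a n r k 1 hk le_rfl (Ne.symm hj0)
      rw [Nat.add_sub_cancel] at hG2
      have heq : Qodd n r (k+1) l
          = ⁅Qeven n r k l j0, Qodd n r 1 j0⁆ + r j0 • Qodd n r k l := by
        rw [hG2, sub_add_cancel]
      rw [heq]
      exact Submodule.add_mem S.toSubmodule (S.lie_mem hEv (hodd1 j0))
        (Submodule.smul_mem S.toSubmodule _ (IH l))
  have hEvenAll : ∀ k, 1 ≤ k → ∀ i j, Qeven n r k i j ∈ S := by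
    intro k hk i j
    by_cases hij : i = j
    · rw [hij, Qeven_same]; exact Submodule.zero_mem S.toSubmodule
    · have hG := G1 n r k 1 hk le_rfl i j
      rw [Nat.add_sub_cancel] at hG
      rw [← hG]
      exact S.lie_mem (hOddAll k hk i) (hodd1 j)
  have hbwd : ∀ m, Lbar m ≤ S.toSubmodule := by
    intro m
    rcases Nat.eq_zero_or_pos m with rfl | hm
    · rw [hLbar0]; exact bot_le
    rcases hparity m hm with ⟨k, hk, rfl⟩ | ⟨k, hk, rfl⟩
    · rw [hLbarOdd k hk, Submodule.span_le]
      rintro y ⟨l, rfl⟩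
      exact hOddAll k hk l
    · rw [hLbarEven k hk, Submodule.span_le]
      rintro y ⟨i, j, hij, rfl⟩
      exact hEvenAll k hk i j
  set K : LieSubalgebra ℂ (LLM n r) :=
    { (⨆ m, Lbar m : Submodule ℂ (LLM n r)) with
      lie_mem' := fun {x y} hx hy => hsupclosed x hx y hy } with hK
  have hfwd : S ≤ K := by
    rw [hS]
    refine LieSubalgebra.lieSpan_le.mpr ?_
    rintro z ⟨i, rfl⟩
    show Qgen n r i ∈ K
    have h1 : Qodd n r 1 i ∈ Lbar 1 := by
      have h2 := memOdd 1 le_rfl i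
      have e : (2*1-1 : ℕ) = 1 := by norm_num
      rwa [e] at h2
    rw [Qgen_eq_Qodd]
    exact le_iSup Lbar 1 h1
  refine ⟨?_, ?_, quasi, ?_⟩
  · -- iff
    intro x
    constructor
    · intro hx
      exact hfwd hx
    · intro hx
      exact (iSup_le hbwd) hx
  · -- iSupIndep
    refine iSupIndep_def.mpr fun m => Submodule.disjoint_def.mpr fun x hx hx' => ?_
    have hx'' : x ∈ ⨆ p : {j : ℕ // j ≠ m}, Lbar p.1 := by
      rwa [iSup_subtype]
    obtain ⟨f, hfmem, hfsum⟩ := (Submodule.mem_iSup_iff_exists_finsupp _ _).mp hx''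
    set g : ℕ → LLM n r := fun m'' => if h : m'' = m then -x else f ⟨m'', h⟩ with hgdef
    have hsupp : m ∉ f.support.image (Subtype.val) := by
      intro hmem
      obtain ⟨p, _, hp⟩ := Finset.mem_image.mp hmem
      exact p.2 hp
    have hgm : g m = -x := by simp [hgdef]
    have hgmem : ∀ m'' ∈ insert m (f.support.image Subtype.val), g m'' ∈ Lbar m'' := by
      intro m'' _
      by_cases h : m'' = m
      · subst h
        rw [hgm]; exact neg_mem hx
      · have hgm2 : g m'' = f ⟨m'', h⟩ := by simp [hgdef, h]
        rw [hgm2]; exact hfmem ⟨m'', h⟩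
    have hsum0 : ∑ m'' ∈ insert m (f.support.image Subtype.val), g m'' = 0 := by
      rw [Finset.sum_insert hsupp]
      have h1 : ∑ m'' ∈ f.support.image Subtype.val, g m'' = ∑ p ∈ f.support, f p := by
        rw [Finset.sum_image (fun p _ q _ h => Subtype.ext h)]
        refine Finset.sum_congr rfl fun p _ => ?_
        simp [hgdef, p.2]
      have h2 : ∑ p ∈ f.support, f p = x := hfsum
      rw [h1, h2, hgm, neg_add_cancel]
    have hz := Z (insert m (f.support.image Subtype.val)) g hgmem hsum0 m
      (Finset.mem_insert_self m _)
    rw [hgm] at hz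
    exact neg_eq_zero.mp hz
  · -- dimensions
    intro k hk
    constructor
    · rw [hLbarOdd k hk, oddSetEq, finrank_span_eq_card (liOdd n r k), Fintype.card_fin]
    · rw [hLbarEven k hk, evenSetEq, finrank_span_eq_card (liEven n r k), cardPairLT]
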